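/- For every real θ > 0 and every real μ, the series ∑_{k=1}^∞ 1/(θ + |μ - k²|) converges and satisfies ∑_{k=1}^∞ 1/(θ + |μ - k²|) ≤ 1/θ + 2·∑_{k=1}^∞ 1/(θ + k²). -/
import Mathlib

/-- There is a positive integer `k₀` (essentially the nearest integer to `√μ`)
such that `|μ - n²| ≥ (n - k₀)²` for every positive integer `n ≠ k₀`. -/
lemma exists_center (μ : ℝ) :
    ∃ k₀ : ℕ, 1 ≤ k₀ ∧ ∀ n : ℕ, 1 ≤ n → n ≠ k₀ →
      ((n : ℝ) - (k₀ : ℝ)) ^ 2 ≤ |μ - (n : ℝ) ^ 2| := by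
  rcases le_or_gt μ 1 with hμ | hμ
  · refine ⟨1, le_refl 1, fun n hn hne => ?_⟩
    have hn2 : 2 ≤ n := by omega
    have hn2' : (2 : ℝ) ≤ (n : ℝ) := by exact_mod_cast hn2
    rw [abs_of_nonpos (by nlinarith)]
    push_cast
    nlinarith
  · have hμ0 : (0 : ℝ) ≤ μ := by linarith
    set s := Real.sqrt μ with hs
    have hss : s ^ 2 = μ := Real.sq_sqrt hμ0
    have hs0 : 0 ≤ s := Real.sqrt_nonneg μ
    have hs1 : 1 ≤ s := by nlinarith
    have hround : |s - (round s : ℝ)| ≤ 1 / 2 := abs_sub_round s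
    have hround' := abs_le.mp hround
    have hr1 : 1 ≤ round s := by
      have h0 : (0 : ℝ) < (round s : ℝ) := by linarith [hround'.2]
      have h0' : (0 : ℤ) < round s := by exact_mod_cast h0
      omega
    refine ⟨(round s).toNat, by omega, fun n hn hne => ?_⟩
    set r : ℝ := (((round s).toNat : ℕ) : ℝ) with hrdef
    have hrr : r = (round s : ℝ) := by
      rw [hrdef]
      exact_mod_cast congrArg (fun z : ℤ => (z : ℝ)) (Int.toNat_of_nonneg (by omega))
    have hr1' : (1 : ℝ) ≤ r := by
      rw [hrr]; exact_mod_cast hr1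
    have hn1 : (1 : ℝ) ≤ (n : ℝ) := by exact_mod_cast hn
    -- the distance between n and k₀ is at least 1
    have hne' : (n : ℤ) - ((round s).toNat : ℤ) ≠ 0 := by
      intro h
      exact hne (by exact_mod_cast sub_eq_zero.mp h)
    have hj1 : (1 : ℝ) ≤ |(n : ℝ) - r| := by
      have := Int.one_le_abs hne'
      have h2 : (1 : ℝ) ≤ |((n : ℤ) - ((round s).toNat : ℤ) : ℤ)| := by exact_mod_cast this
      rw [hrdef]
      rw [show ((n : ℝ) - (((round s).toNat : ℕ) : ℝ)) = (((n : ℤ) - ((round s).toNat : ℤ) : ℤ) : ℝ) by push_cast; ring]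
      rw [← Int.cast_abs]
      exact_mod_cast this
    set j := |(n : ℝ) - r| with hjdef
    have hjle : j ≤ (n : ℝ) + r - 2 := abs_le.mpr ⟨by linarith, by linarith⟩
    have hroundr : |s - r| ≤ 1 / 2 := by rw [hrr]; exact hround
    have hsn : j - 1 / 2 ≤ |s - (n : ℝ)| := by
      have h1 : |(n : ℝ) - r| ≤ |(n : ℝ) - s| + |s - r| := abs_sub_le _ _ _
      have h2 : |(n : ℝ) - s| = |s - (n : ℝ)| := abs_sub_comm _ _
      rw [h2] at h1
      linarith [h1, hroundr, hjdef]
    have hsum : j + 3 / 2 ≤ s + (n : ℝ) := by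
      have : r - s ≤ 1 / 2 := by rw [hrr]; linarith [hround'.1]
      linarith
    have habs : |μ - (n : ℝ) ^ 2| = |s - (n : ℝ)| * (s + (n : ℝ)) := by
      have heq : μ - (n : ℝ) ^ 2 = (s - n) * (s + n) := by rw [← hss]; ring
      rw [heq, abs_mul, abs_of_nonneg (by linarith : (0 : ℝ) ≤ s + n)]
    have hmul : (j - 1 / 2) * (j + 3 / 2) ≤ |s - (n : ℝ)| * (s + (n : ℝ)) :=
      mul_le_mul hsn hsum (by linarith) (abs_nonneg _)
    have hjsq : ((n : ℝ) - r) ^ 2 = j ^ 2 := (sq_abs _).symm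
    rw [habs, hjsq]
    nlinarith

/-- The key summation estimate in the proof of Proposition 2.9:
`∑_{k≥1} 1/(θ + |μ - k²|)` converges and is at most `1/θ + 2 ∑_{k≥1} 1/(θ + k²)`. -/
theorem stmt_5 (θ μ : ℝ) (hθ : 0 < θ) :
    Summable (fun k : ℕ => 1 / (θ + |μ - ((k : ℝ) + 1) ^ 2|))
    ∧ ∑' k : ℕ, 1 / (θ + |μ - ((k : ℝ) + 1) ^ 2|)
        ≤ 1 / θ + 2 * ∑' k : ℕ, 1 / (θ + ((k : ℝ) + 1) ^ 2) := by
  classical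
  obtain ⟨k₀, hk₀, hkey⟩ := exists_center μ
  set m : ℕ := k₀ - 1 with hm
  have hmk : m + 1 = k₀ := by omega
  set F : ℕ → ℝ := fun k => 1 / (θ + |μ - ((k : ℝ) + 1) ^ 2|) with hF
  set G : ℕ → ℝ := fun k => 1 / (θ + ((k : ℝ) + 1) ^ 2) with hG
  have hFpos : ∀ k, 0 ≤ F k := fun k => by rw [hF]; positivity
  have hGpos : ∀ k, 0 ≤ G k := fun k => by rw [hG]; positivity
  have hGsum : Summable G := by
    have h1 : Summable (fun k : ℕ => 1 / ((k : ℝ) + 1) ^ 2) := by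
      have h2 := (summable_nat_add_iff 1).mpr <|
        Real.summable_one_div_nat_pow.mpr (le_refl 2)
      refine h2.congr fun k => ?_
      push_cast
      ring
    refine Summable.of_nonneg_of_le hGpos (fun k => ?_) h1
    rw [hG]
    apply one_div_le_one_div_of_le
    · positivity
    · linarith
  set S : ℝ := ∑' k : ℕ, G k with hS
  have key : ∀ N : ℕ, ∑ k ∈ Finset.range N, F k ≤ 1 / θ + 2 * S := by
    intro N
    set φ : ℕ → ℕ := fun k => if k < m then m - k - 1 else k - m - 1 with hφ
    rw [← Finset.sum_filter_add_sum_filter_not (Finset.range N) (fun k => k = m) F]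
    have part1 : ∑ k ∈ (Finset.range N).filter (fun k => k = m), F k ≤ 1 / θ := by
      have hsub : (Finset.range N).filter (fun k => k = m) ⊆ {m} := by
        intro x hx
        simp only [Finset.mem_filter] at hx
        simp [hx.2]
      calc ∑ k ∈ (Finset.range N).filter (fun k => k = m), F k
          ≤ ∑ k ∈ ({m} : Finset ℕ), F k :=
            Finset.sum_le_sum_of_subset_of_nonneg hsub (fun i _ _ => hFpos i)
        _ = F m := Finset.sum_singleton _ _
        _ ≤ 1 / θ := by
            rw [hF]
            apply one_div_le_one_div_of_le hθ
            simp [abs_nonneg]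
    have part2 : ∑ k ∈ (Finset.range N).filter (fun k => ¬ k = m), F k ≤ 2 * S := by
      set t : Finset ℕ := (Finset.range N).filter (fun k => ¬ k = m) with ht
      have hFG : ∀ k ∈ t, F k ≤ G (φ k) := by
        intro k hk
        simp only [ht, Finset.mem_filter] at hk
        have hne : k + 1 ≠ k₀ := by omega
        have hkey' := hkey (k + 1) (by omega) hne
        push_cast at hkey'
        have hsq : ((φ k : ℝ) + 1) ^ 2 = ((k : ℝ) + 1 - (k₀ : ℝ)) ^ 2 := by
          rcases lt_or_ge k m with hlt | hge
          · have hnat : φ k + 1 + (k + 1) = k₀ := by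
              simp only [hφ, if_pos hlt]; omega
            have hcast : (φ k : ℝ) + 1 + ((k : ℝ) + 1) = (k₀ : ℝ) := by exact_mod_cast hnat
            have : (φ k : ℝ) + 1 = (k₀ : ℝ) - ((k : ℝ) + 1) := by linarith
            rw [this]; ring
          · have hnat : φ k + 1 + k₀ = k + 1 := by
              simp only [hφ, if_neg (not_lt.mpr hge)]; omega
            have hcast : (φ k : ℝ) + 1 + (k₀ : ℝ) = (k : ℝ) + 1 := by exact_mod_cast hnat
            have : (φ k : ℝ) + 1 = (k : ℝ) + 1 - (k₀ : ℝ) := by linarith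
            rw [this]
        rw [hF, hG]
        simp only
        apply one_div_le_one_div_of_le (by positivity)
        rw [hsq]
        linarith [hkey']
      have step1 : ∑ k ∈ t, F k ≤ ∑ k ∈ t, G (φ k) := Finset.sum_le_sum hFG
      rw [← Finset.sum_filter_add_sum_filter_not t (fun k => k < m) (fun k => G (φ k))]
        at step1
      have hlow : ∑ k ∈ t.filter (fun k => k < m), G (φ k) ≤ S := by
        have hinj : ∀ x ∈ t.filter (fun k => k < m), ∀ y ∈ t.filter (fun k => k < m),
            φ x = φ y → x = y := by
          intro x hx y hy hxy
          simp only [Finset.mem_filter] at hx hy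
          simp only [hφ, if_pos hx.2, if_pos hy.2] at hxy
          omega
        calc ∑ k ∈ t.filter (fun k => k < m), G (φ k)
            = ∑ j ∈ (t.filter (fun k => k < m)).image φ, G j :=
              (Finset.sum_image hinj).symm
          _ ≤ S := Summable.sum_le_tsum _ (fun i _ => hGpos i) hGsum
      have hhigh : ∑ k ∈ t.filter (fun k => ¬ k < m), G (φ k) ≤ S := by
        have hinj : ∀ x ∈ t.filter (fun k => ¬ k < m), ∀ y ∈ t.filter (fun k => ¬ k < m),
            φ x = φ y → x = y := by
          intro x hx y hy hxy
          simp only [ht, Finset.mem_filter] at hx hy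
          simp only [hφ, if_neg hx.2, if_neg hy.2] at hxy
          omega
        calc ∑ k ∈ t.filter (fun k => ¬ k < m), G (φ k)
            = ∑ j ∈ (t.filter (fun k => ¬ k < m)).image φ, G j :=
              (Finset.sum_image hinj).symm
          _ ≤ S := Summable.sum_le_tsum _ (fun i _ => hGpos i) hGsum
      linarith
    linarith
  have hFsum : Summable F := summable_of_sum_range_le hFpos key
  exact ⟨hFsum, Summable.tsum_le_of_sum_range_le hFsum key⟩
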